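/- Let X₁, ..., Xₙ (n ≥ 4) be i.i.d. lognormal with parameters μ and σ², k = exp(σ²) - 1, and Kₙ = (1/n²)(∑ᵢXᵢ)(∑ⱼ1/Xⱼ) - 1. Then Var(Kₙ) = (2(n-1)/n²)·k²·(1 + k + k²/(2n)). -/

import Mathlib

open MeasureTheory ProbabilityTheory Real NNReal
open scoped ENNReal

lemma gaussPDF_mul_exp (μ : ℝ) (v : ℝ≥0) (hv : v ≠ 0) (t x : ℝ) :
    gaussianPDFReal μ v x * rexp (t * x) =
      rexp (μ * t + v * t ^ 2 / 2) * gaussianPDFReal (μ + v * t) v x := by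
  have hv' : (0 : ℝ) < v := lt_of_le_of_ne v.coe_nonneg (by exact_mod_cast hv.symm)
  have key : (-(x - μ) ^ 2 / (2 * (v : ℝ)) + t * x) =
      (μ * t + (v : ℝ) * t ^ 2 / 2 + -(x - (μ + (v : ℝ) * t)) ^ 2 / (2 * (v : ℝ))) := by
    field_simp
    ring
  simp only [gaussianPDFReal_def]
  rw [mul_assoc, ← Real.exp_add, key, Real.exp_add]
  ring

lemma integrable_exp_gaussianReal (μ : ℝ) (v : ℝ≥0) (hv : v ≠ 0) (t : ℝ) :
    Integrable (fun x => rexp (t * x)) (gaussianReal μ v) := by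
  rw [gaussianReal_of_var_ne_zero _ hv, gaussianPDF_def]
  have hmeas : Measurable fun x => (gaussianPDFReal μ v x).toNNReal :=
    (measurable_gaussianPDFReal μ v).real_toNNReal
  have : (fun x => ENNReal.ofReal (gaussianPDFReal μ v x)) =
      fun x => ((gaussianPDFReal μ v x).toNNReal : ℝ≥0∞) := rfl
  rw [this, integrable_withDensity_iff_integrable_smul hmeas]
  apply Integrable.congr ((integrable_gaussianPDFReal (μ + v * t) v).const_mul
    (rexp (μ * t + v * t ^ 2 / 2)))
  filter_upwards with x
  rw [NNReal.smul_def, Real.coe_toNNReal _ (gaussianPDFReal_nonneg μ v x)]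
  exact (gaussPDF_mul_exp μ v hv t x).symm

lemma integral_exp_gaussianReal (μ : ℝ) (v : ℝ≥0) (hv : v ≠ 0) (t : ℝ) :
    ∫ x, rexp (t * x) ∂(gaussianReal μ v) = rexp (μ * t + v * t ^ 2 / 2) := by
  rw [gaussianReal_of_var_ne_zero _ hv, gaussianPDF_def]
  have hmeas : Measurable fun x => (gaussianPDFReal μ v x).toNNReal :=
    (measurable_gaussianPDFReal μ v).real_toNNReal
  have : (fun x => ENNReal.ofReal (gaussianPDFReal μ v x)) =
      fun x => ((gaussianPDFReal μ v x).toNNReal : ℝ≥0∞) := rfl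
  rw [this, integral_withDensity_eq_integral_smul hmeas]
  have : ∀ x, (gaussianPDFReal μ v x).toNNReal • rexp (t * x) =
      rexp (μ * t + v * t ^ 2 / 2) * gaussianPDFReal (μ + v * t) v x := by
    intro x
    rw [NNReal.smul_def, Real.coe_toNNReal _ (gaussianPDFReal_nonneg μ v x)]
    exact gaussPDF_mul_exp μ v hv t x
  simp_rw [this]
  rw [MeasureTheory.integral_const_mul, integral_gaussianPDFReal_eq_one _ hv, mul_one]


lemma exp_lin {Ω : Type*} [MeasureSpace Ω] [IsProbabilityMeasure (ℙ : Measure Ω)]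
    {n : ℕ} {μ : ℝ} {v : ℝ≥0} (hv : v ≠ 0) {Y : Fin n → Ω → ℝ} (hm : ∀ i, Measurable (Y i))
    (hdist : ∀ i, Measure.map (Y i) ℙ = gaussianReal μ v)
    (hind : iIndepFun Y ℙ) (c : Fin n → ℝ) :
    Integrable (fun x => rexp (∑ i, c i * Y i x)) ℙ ∧
      ∫ x, rexp (∑ i, c i * Y i x) ∂ℙ = rexp (∑ i, (μ * c i + v * c i ^ 2 / 2)) := by
  have hZm : ∀ i, Measurable fun x => rexp (c i * Y i x) :=
    fun i => ((hm i).const_mul _).exp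
  have hZind : iIndepFun (fun i x => rexp (c i * Y i x)) ℙ :=
    hind.comp (fun i y => rexp (c i * y)) (fun i => (measurable_const_mul _).exp)
  have hint1 : ∀ i, Integrable (fun x => rexp (c i * Y i x)) ℙ := by
    intro i
    have h := integrable_exp_gaussianReal μ v hv (c i)
    rw [← hdist i] at h
    exact (integrable_map_measure h.aestronglyMeasurable (hm i).aemeasurable).1 h
  have hval1 : ∀ i, ∫ x, rexp (c i * Y i x) ∂ℙ = rexp (μ * c i + v * c i ^ 2 / 2) := by
    intro i
    rw [← integral_exp_gaussianReal μ v hv (c i), ← hdist i,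
      integral_map (hm i).aemeasurable ((measurable_const_mul _).exp).aestronglyMeasurable]
  have hprod : ∀ s : Finset (Fin n), Integrable (fun x => ∏ i ∈ s, rexp (c i * Y i x)) ℙ := by
    intro s
    classical
    induction s using Finset.induction_on with
    | empty => simpa using (integrable_const (1 : ℝ) (μ := (ℙ : Measure Ω)))
    | @insert a s ha ih =>
      have hIF : IndepFun (fun x => ∏ i ∈ s, rexp (c i * Y i x))
          (fun x => rexp (c a * Y a x)) ℙ := by
        have h := iIndepFun.indepFun_finset_prod_of_notMem hZind hZm ha
        have key : (∏ j ∈ s, fun x => rexp (c j * Y j x)) =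
            (fun x => ∏ i ∈ s, rexp (c i * Y i x)) := by
          funext x; simp
        rwa [key] at h
      have := hIF.symm.integrable_mul (hint1 a) ih
      have heq : (fun x => ∏ i ∈ insert a s, rexp (c i * Y i x)) =
          (fun x => rexp (c a * Y a x)) * (fun x => ∏ i ∈ s, rexp (c i * Y i x)) := by
        funext x
        simp [Finset.prod_insert ha]
      rw [heq]
      exact this
  constructor
  · have heq : (fun x => rexp (∑ i, c i * Y i x)) =
        fun x => ∏ i, rexp (c i * Y i x) := by
      funext x; rw [← Real.exp_sum]
    rw [heq]; exact hprod Finset.univ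
  · have hmgf := iIndepFun.mgf_sum (t := 1) hZind hZm Finset.univ
    have h1 : mgf (∑ i, fun x => c i * Y i x) ℙ 1 =
        ∫ x, rexp (∑ i, c i * Y i x) ∂ℙ := by
      simp [mgf, Finset.sum_apply]
    have hW : iIndepFun (fun i x => c i * Y i x) ℙ :=
      hind.comp (fun i y => c i * y) (fun i => measurable_const_mul _)
    have hWm : ∀ i, Measurable fun x => c i * Y i x := fun i => (hm i).const_mul _
    have hmgf2 := iIndepFun.mgf_sum (t := 1) hW hWm Finset.univ
    rw [← h1, hmgf2]
    have h2 : ∀ i, mgf (fun x => c i * Y i x) ℙ 1 = rexp (μ * c i + v * c i ^ 2 / 2) := by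
      intro i
      rw [mgf]
      simpa using hval1 i
    rw [Finset.prod_congr rfl (fun i _ => h2 i), ← Real.exp_sum]


noncomputable def Kdl {n : ℕ} (a b : Fin n) : ℝ := if a = b then 1 else 0

lemma sum_Kdl {n : ℕ} (a : Fin n) : ∑ x, Kdl a x = 1 := by
  simp [Kdl, Finset.sum_ite_eq]

lemma sum_Kdl_mul {n : ℕ} (a b : Fin n) : ∑ m, Kdl a m * Kdl b m = Kdl a b := by
  rcases eq_or_ne a b with rfl | h
  · rw [show Kdl a a = 1 by simp [Kdl], ← sum_Kdl a]
    refine Finset.sum_congr rfl fun m _ => ?_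
    simp only [Kdl]; split_ifs <;> norm_num
  · rw [show Kdl a b = 0 by simp [Kdl, h]]
    refine Finset.sum_eq_zero fun m _ => ?_
    simp only [Kdl]
    split_ifs with h1 h2 <;> first | ring1 | (exact absurd (h1.trans h2.symm) h)

section
variable {Ω : Type*} [MeasureSpace Ω] [IsProbabilityMeasure (ℙ : Measure Ω)]
    {n : ℕ} {μ : ℝ} {v : ℝ≥0} (hv : v ≠ 0) {Y : Fin n → Ω → ℝ} (hm : ∀ i, Measurable (Y i))
    (hdist : ∀ i, Measure.map (Y i) ℙ = gaussianReal μ v)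
    (hind : iIndepFun Y ℙ)

include hv hm hdist hind

lemma intE (i j : Fin n) :
    Integrable (fun x => rexp (Y i x - Y j x)) ℙ ∧
      ∫ x, rexp (Y i x - Y j x) ∂ℙ = (if i = j then 1 else rexp (v : ℝ)) := by
  have h := exp_lin hv hm hdist hind (fun m => Kdl i m - Kdl j m)
  have hfun : (fun x => rexp (∑ m, (Kdl i m - Kdl j m) * Y m x)) =
      fun x => rexp (Y i x - Y j x) := by
    funext x
    congr 1
    simp only [sub_mul, Finset.sum_sub_distrib, Kdl, ite_mul, one_mul, zero_mul,
      Finset.sum_ite_eq, Finset.mem_univ, if_true]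
  have hexp : (∑ m, (μ * (Kdl i m - Kdl j m) + v * (Kdl i m - Kdl j m) ^ 2 / 2)) =
      (v : ℝ) * (1 - Kdl i j) := by
    have key : ∀ m, μ * (Kdl i m - Kdl j m) + (v : ℝ) * (Kdl i m - Kdl j m) ^ 2 / 2
        = μ * Kdl i m - μ * Kdl j m + (v : ℝ)/2 * Kdl i m + (v : ℝ)/2 * Kdl j m
          - (v : ℝ) * (Kdl i m * Kdl j m) := by
      intro m
      simp only [Kdl]
      split_ifs <;> ring1
    rw [Finset.sum_congr rfl fun m _ => key m]
    simp only [Finset.sum_add_distrib, Finset.sum_sub_distrib, ← Finset.mul_sum, sum_Kdl,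
      sum_Kdl_mul]
    ring
  rw [hfun] at h
  refine ⟨h.1, ?_⟩
  rw [h.2, hexp]
  rcases eq_or_ne i j with rfl | hij
  · simp [Kdl]
  · simp [Kdl, hij]

lemma intF (i j k l : Fin n) :
    Integrable (fun x => rexp (Y i x - Y j x + (Y k x - Y l x))) ℙ ∧
      ∫ x, rexp (Y i x - Y j x + (Y k x - Y l x)) ∂ℙ
        = rexp (v : ℝ) ^ 2 *
          ((1 + (rexp (v:ℝ) - 1) * Kdl i k) * (1 + (rexp (v:ℝ) - 1) * Kdl j l)
            * (1 + ((rexp (v:ℝ))⁻¹ - 1) * Kdl i j) * (1 + ((rexp (v:ℝ))⁻¹ - 1) * Kdl i l)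
            * (1 + ((rexp (v:ℝ))⁻¹ - 1) * Kdl k j) * (1 + ((rexp (v:ℝ))⁻¹ - 1) * Kdl k l)) := by
  have h := exp_lin hv hm hdist hind
    (fun m => Kdl i m - Kdl j m + (Kdl k m - Kdl l m))
  have hfun : (fun x => rexp (∑ m, (Kdl i m - Kdl j m + (Kdl k m - Kdl l m)) * Y m x)) =
      fun x => rexp (Y i x - Y j x + (Y k x - Y l x)) := by
    funext x
    congr 1
    simp only [add_mul, sub_mul, Finset.sum_add_distrib, Finset.sum_sub_distrib, Kdl, ite_mul,
      one_mul, zero_mul, Finset.sum_ite_eq, Finset.mem_univ, if_true]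
  have hexp : (∑ m, (μ * (Kdl i m - Kdl j m + (Kdl k m - Kdl l m))
        + v * (Kdl i m - Kdl j m + (Kdl k m - Kdl l m)) ^ 2 / 2)) =
      2 * (v : ℝ) + (v:ℝ) * Kdl i k + (v:ℝ) * Kdl j l - (v:ℝ) * Kdl i j - (v:ℝ) * Kdl i l
        - (v:ℝ) * Kdl k j - (v:ℝ) * Kdl k l := by
    have key : ∀ m, μ * (Kdl i m - Kdl j m + (Kdl k m - Kdl l m))
          + (v:ℝ) * (Kdl i m - Kdl j m + (Kdl k m - Kdl l m)) ^ 2 / 2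
        = μ * Kdl i m - μ * Kdl j m + μ * Kdl k m - μ * Kdl l m
          + (v:ℝ)/2 * Kdl i m + (v:ℝ)/2 * Kdl j m + (v:ℝ)/2 * Kdl k m + (v:ℝ)/2 * Kdl l m
          + (v:ℝ) * (Kdl i m * Kdl k m) + (v:ℝ) * (Kdl j m * Kdl l m)
          - (v:ℝ) * (Kdl i m * Kdl j m) - (v:ℝ) * (Kdl i m * Kdl l m)
          - (v:ℝ) * (Kdl k m * Kdl j m) - (v:ℝ) * (Kdl k m * Kdl l m) := by
      intro m
      simp only [Kdl]
      split_ifs <;> ring1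
    rw [Finset.sum_congr rfl fun m _ => key m]
    simp only [Finset.sum_add_distrib, Finset.sum_sub_distrib, ← Finset.mul_sum, sum_Kdl,
      sum_Kdl_mul]
    ring
  rw [hfun] at h
  refine ⟨h.1, ?_⟩
  rw [h.2, hexp]
  have e1 : ∀ a b : Fin n, rexp ((v:ℝ) * Kdl a b) = 1 + (rexp (v:ℝ) - 1) * Kdl a b := by
    intro a b
    rcases eq_or_ne a b with rfl | h
    · simp [Kdl]
    · simp [Kdl, h]
  have e2 : ∀ a b : Fin n, rexp (-((v:ℝ) * Kdl a b)) = 1 + ((rexp (v:ℝ))⁻¹ - 1) * Kdl a b := by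
    intro a b
    rcases eq_or_ne a b with rfl | h
    · simp [Kdl, Real.exp_neg]
    · simp [Kdl, h]
  have expand : 2 * (v : ℝ) + (v:ℝ) * Kdl i k + (v:ℝ) * Kdl j l - (v:ℝ) * Kdl i j
        - (v:ℝ) * Kdl i l - (v:ℝ) * Kdl k j - (v:ℝ) * Kdl k l
      = ((v:ℝ) + (v:ℝ)) + (v:ℝ) * Kdl i k + (v:ℝ) * Kdl j l + (-((v:ℝ) * Kdl i j))
        + (-((v:ℝ) * Kdl i l)) + (-((v:ℝ) * Kdl k j)) + (-((v:ℝ) * Kdl k l)) := by ring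
  rw [expand]
  rw [Real.exp_add, Real.exp_add, Real.exp_add, Real.exp_add, Real.exp_add, Real.exp_add,
    Real.exp_add, e1, e1, e2, e2, e2, e2]
  rw [sq]
  ring

end


noncomputable def GJ (N α β : ℝ) : ℝ :=
  N^3 + 2*N^2*α + 4*N^2*β + N*α^2 + 4*N*α*β^2 + 8*N*α*β + 6*N*β^2
    + α^2*β^4 + 4*α^2*β^3 + 6*α^2*β^2 + 4*α^2*β + 2*α*β^4 + 8*α*β^3 + 8*α*β^2 + β^4 + 4*β^3


/-- polynomial abbreviations -/
noncomputable def GK (N α β u : ℝ) : ℝ :=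
  N^2 + 2*N*α*β*u + 2*N*α + 3*N*β + α^2*β^3*u + 3*α^2*β^2*u + 3*α^2*β*u + α^2
    + 2*α*β^3*u + 4*α*β^2*u + 2*α*β^2 + 4*α*β + β^3*u + 3*β^2


lemma sumL {n : ℕ} (α β : ℝ) (i j k : Fin n) :
    ∑ l, (1 + α * Kdl j l) * (1 + β * Kdl i l) * (1 + β * Kdl k l)
      = (n : ℝ) + α + 2*β + α*β*(Kdl i j + Kdl j k) + β^2 * Kdl i k
        + α*β^2*(Kdl i j * Kdl i k) := by
  have key : ∀ l, (1 + α * Kdl j l) * (1 + β * Kdl i l) * (1 + β * Kdl k l)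
      = 1 + α * Kdl j l + β * Kdl i l + β * Kdl k l
        + (α*β*Kdl i j) * Kdl i l + (α*β*Kdl j k) * Kdl k l
        + (β^2 * Kdl i k) * Kdl k l + (α*β^2*(Kdl i j * Kdl i k)) * Kdl k l := by
    intro l
    simp only [Kdl]
    split_ifs <;> subst_vars <;> first | ring1 | simp_all
  rw [Finset.sum_congr rfl (fun l _ => key l)]
  simp only [Finset.sum_add_distrib, Finset.sum_const, ← Finset.mul_sum, sum_Kdl,
    Finset.card_univ, Fintype.card_fin, nsmul_eq_mul, mul_one]
  ring

lemma sumK {n : ℕ} (α β : ℝ) (i j : Fin n) :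
    ∑ k, (1 + α * Kdl i k) * (1 + β * Kdl k j) *
        ((n : ℝ) + α + 2*β + α*β*(Kdl i j + Kdl j k) + β^2 * Kdl i k
          + α*β^2*(Kdl i j * Kdl i k))
      = GK n α β (Kdl i j) := by
  have key : ∀ k, (1 + α * Kdl i k) * (1 + β * Kdl k j) *
        ((n : ℝ) + α + 2*β + α*β*(Kdl i j + Kdl j k) + β^2 * Kdl i k
          + α*β^2*(Kdl i j * Kdl i k))
      = ((n:ℝ) + α + 2*β + α*β*Kdl i j)
        + ((n:ℝ)*α + (n:ℝ)*α*β*Kdl i j + α^2*β^3*Kdl i j + 3*α^2*β^2*Kdl i j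
            + 3*α^2*β*Kdl i j + α^2 + 2*α*β^3*Kdl i j + 3*α*β^2*Kdl i j + α*β^2
            + 2*α*β + β^3*Kdl i j + β^2) * Kdl i k
        + ((n:ℝ)*β + α*β^2*Kdl i j + α*β^2 + 2*α*β + 2*β^2) * Kdl j k := by
    intro k
    simp only [Kdl]
    split_ifs <;> subst_vars <;> first | ring1 | simp_all
  rw [Finset.sum_congr rfl (fun k _ => key k)]
  simp only [Finset.sum_add_distrib, Finset.sum_const, ← Finset.mul_sum, sum_Kdl,
    Finset.card_univ, Fintype.card_fin, nsmul_eq_mul, mul_one, GK]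
  ring

lemma sumJ {n : ℕ} (α β : ℝ) (i : Fin n) :
    ∑ j, (1 + β * Kdl i j) * GK n α β (Kdl i j) = GJ n α β := by
  have key : ∀ j, (1 + β * Kdl i j) * GK n α β (Kdl i j)
      = ((n:ℝ)^2 + 2*(n:ℝ)*α + 3*(n:ℝ)*β + α^2 + 2*α*β^2 + 4*α*β + 3*β^2)
        + ((n:ℝ)^2*β + 2*(n:ℝ)*α*β^2 + 4*(n:ℝ)*α*β + 3*(n:ℝ)*β^2 + α^2*β^4
            + 4*α^2*β^3 + 6*α^2*β^2 + 4*α^2*β + 2*α*β^4 + 8*α*β^3 + 8*α*β^2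
            + β^4 + 4*β^3) * Kdl i j := by
    intro j
    simp only [Kdl, GK]
    split_ifs <;> subst_vars <;> first | ring1 | simp_all
  rw [Finset.sum_congr rfl (fun j _ => key j)]
  simp only [Finset.sum_add_distrib, Finset.sum_const, ← Finset.mul_sum, sum_Kdl,
    Finset.card_univ, Fintype.card_fin, nsmul_eq_mul, mul_one, GJ]
  ring

lemma sumB {n : ℕ} (α β : ℝ) :
    ∑ i : Fin n, ∑ j, ∑ k, ∑ l,
      (1 + α * Kdl i k) * (1 + α * Kdl j l) * (1 + β * Kdl i j) * (1 + β * Kdl i l)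
        * (1 + β * Kdl k j) * (1 + β * Kdl k l)
      = (n : ℝ) * GJ n α β := by
  have hl : ∀ i j k : Fin n, ∑ l,
      (1 + α * Kdl i k) * (1 + α * Kdl j l) * (1 + β * Kdl i j) * (1 + β * Kdl i l)
        * (1 + β * Kdl k j) * (1 + β * Kdl k l)
      = (1 + β * Kdl i j) * ((1 + α * Kdl i k) * (1 + β * Kdl k j) *
          ((n : ℝ) + α + 2*β + α*β*(Kdl i j + Kdl j k) + β^2 * Kdl i k
            + α*β^2*(Kdl i j * Kdl i k))) := by
    intro i j k
    have : ∀ l, (1 + α * Kdl i k) * (1 + α * Kdl j l) * (1 + β * Kdl i j)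
          * (1 + β * Kdl i l) * (1 + β * Kdl k j) * (1 + β * Kdl k l)
        = ((1 + β * Kdl i j) * ((1 + α * Kdl i k) * (1 + β * Kdl k j))) *
          ((1 + α * Kdl j l) * (1 + β * Kdl i l) * (1 + β * Kdl k l)) := by
      intro l; ring
    rw [Finset.sum_congr rfl (fun l _ => this l), ← Finset.mul_sum, sumL α β i j k]
    ring
  have hk : ∀ i j : Fin n, ∑ k, (1 + β * Kdl i j) * ((1 + α * Kdl i k) * (1 + β * Kdl k j) *
        ((n : ℝ) + α + 2*β + α*β*(Kdl i j + Kdl j k) + β^2 * Kdl i k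
          + α*β^2*(Kdl i j * Kdl i k)))
      = (1 + β * Kdl i j) * GK n α β (Kdl i j) := by
    intro i j
    rw [← Finset.mul_sum]
    congr 1
    exact sumK α β i j
  calc ∑ i : Fin n, ∑ j, ∑ k, ∑ l, (1 + α * Kdl i k) * (1 + α * Kdl j l)
          * (1 + β * Kdl i j) * (1 + β * Kdl i l) * (1 + β * Kdl k j) * (1 + β * Kdl k l)
      = ∑ i : Fin n, ∑ j, ∑ k, (1 + β * Kdl i j) * ((1 + α * Kdl i k) * (1 + β * Kdl k j) *
          ((n : ℝ) + α + 2*β + α*β*(Kdl i j + Kdl j k) + β^2 * Kdl i k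
            + α*β^2*(Kdl i j * Kdl i k))) := by
        exact Finset.sum_congr rfl fun i _ => Finset.sum_congr rfl fun j _ =>
          Finset.sum_congr rfl fun k _ => hl i j k
    _ = ∑ i : Fin n, ∑ j, (1 + β * Kdl i j) * GK n α β (Kdl i j) := by
        exact Finset.sum_congr rfl fun i _ => Finset.sum_congr rfl fun j _ => hk i j
    _ = ∑ i : Fin n, GJ n α β := Finset.sum_congr rfl fun i _ => sumJ α β i
    _ = (n : ℝ) * GJ n α β := by
        rw [Finset.sum_const, Finset.card_univ, Fintype.card_fin, nsmul_eq_mul]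

lemma sumE {n : ℕ} (w : ℝ) :
    ∑ i : Fin n, ∑ j, (if i = j then (1:ℝ) else w)
      = (n : ℝ) + (n : ℝ) * ((n : ℝ) - 1) * w := by
  have key : ∀ i j : Fin n, (if i = j then (1:ℝ) else w) = w + (1 - w) * Kdl i j := by
    intro i j; simp only [Kdl]; split_ifs <;> ring
  rw [Finset.sum_congr rfl fun i _ => Finset.sum_congr rfl fun j _ => key i j]
  simp only [Finset.sum_add_distrib, Finset.sum_const, ← Finset.mul_sum, sum_Kdl,
    Finset.card_univ, Fintype.card_fin, nsmul_eq_mul, mul_one]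
  ring


lemma final_alg (n : ℕ) (hn : 4 ≤ n) (w : ℝ) (hw : 0 < w) :
    (1/(n:ℝ)^2)^2 * (w^2 * ((n:ℝ) * GJ n (w-1) (w⁻¹-1)) - ((n:ℝ) + (n:ℝ)*((n:ℝ)-1)*w)^2)
      = 2*((n:ℝ)-1)/(n:ℝ)^2 * (w-1)^2 * (1 + (w-1) + (w-1)^2/(2*(n:ℝ))) := by
  have hn0 : (n:ℝ) ≠ 0 := by
    have : 0 < n := by omega
    exact_mod_cast this.ne'
  have hw0 : w ≠ 0 := hw.ne'
  rw [GJ]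
  field_simp
  ring1


/-- Let `X i = exp (Y i)`, `i = 1, ..., n`, `n ≥ 4`, be i.i.d. lognormal with
parameters `μ, σ²`, `k = exp σ² - 1`, and
`Kₙ = (1/n²)(∑ᵢ Xᵢ)(∑ⱼ 1/Xⱼ) - 1`. Then
`Var(Kₙ) = (2(n-1)/n²)·k²·(1 + k + k²/(2n))`. -/
theorem lognormal_Kn_variance {Ω : Type*} [MeasureSpace Ω]
    [IsProbabilityMeasure (ℙ : Measure Ω)]
    (n : ℕ) (hn : 4 ≤ n) (μ : ℝ) (v : ℝ≥0) (hv : v ≠ 0)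
    (Y : Fin n → Ω → ℝ) (hm : ∀ i, Measurable (Y i))
    (hdist : ∀ i, Measure.map (Y i) ℙ = gaussianReal μ v)
    (hind : iIndepFun Y ℙ) :
    (∫ ω, (1 / (n : ℝ) ^ 2 * ((∑ i, Real.exp (Y i ω)) *
        ∑ j, (Real.exp (Y j ω))⁻¹) - 1) ^ 2 ∂ℙ) -
      (∫ ω, 1 / (n : ℝ) ^ 2 * ((∑ i, Real.exp (Y i ω)) *
        ∑ j, (Real.exp (Y j ω))⁻¹) - 1 ∂ℙ) ^ 2 =
      2 * ((n : ℝ) - 1) / (n : ℝ) ^ 2 * (Real.exp (v : ℝ) - 1) ^ 2 *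
        (1 + (Real.exp (v : ℝ) - 1) + (Real.exp (v : ℝ) - 1) ^ 2 / (2 * n)) := by
  have hE := fun i j => intE hv hm hdist hind i j
  have hF := fun i j k l => intF hv hm hdist hind i j k l
  have h0 : ∀ ω : Ω, (∑ i, rexp (Y i ω)) * (∑ j, (rexp (Y j ω))⁻¹)
      = ∑ i, ∑ j, rexp (Y i ω - Y j ω) := by
    intro ω
    rw [Finset.sum_mul_sum]
    exact Finset.sum_congr rfl fun i _ => Finset.sum_congr rfl fun j _ =>
      (Real.exp_sub _ _).symm
  have hSint : Integrable (fun ω => ∑ i, ∑ j, rexp (Y i ω - Y j ω)) ℙ :=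
    integrable_finset_sum _ fun i _ => integrable_finset_sum _ fun j _ => (hE i j).1
  have hS2int : Integrable
      (fun ω => ∑ i, ∑ j, ∑ k, ∑ l, rexp (Y i ω - Y j ω + (Y k ω - Y l ω))) ℙ :=
    integrable_finset_sum _ fun i _ => integrable_finset_sum _ fun j _ =>
      integrable_finset_sum _ fun k _ => integrable_finset_sum _ fun l _ => (hF i j k l).1
  have hIS : ∫ ω, (∑ i, ∑ j, rexp (Y i ω - Y j ω)) ∂ℙ
      = (n:ℝ) + (n:ℝ)*((n:ℝ)-1) * rexp (v:ℝ) := by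
    rw [integral_finset_sum _ fun i _ =>
      (integrable_finset_sum _ fun j _ => (hE i j).1 : Integrable _ ℙ)]
    rw [Finset.sum_congr rfl fun i _ => integral_finset_sum _ fun j _ => (hE i j).1]
    rw [Finset.sum_congr rfl fun i _ => Finset.sum_congr rfl fun j _ => (hE i j).2]
    exact sumE (rexp (v:ℝ))
  have hIS2 : ∫ ω, (∑ i, ∑ j, ∑ k, ∑ l, rexp (Y i ω - Y j ω + (Y k ω - Y l ω))) ∂ℙ
      = rexp (v:ℝ)^2 * ((n:ℝ) * GJ n (rexp (v:ℝ) - 1) ((rexp (v:ℝ))⁻¹ - 1)) := by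
    rw [integral_finset_sum _ fun i _ => (integrable_finset_sum _ fun j _ =>
      integrable_finset_sum _ fun k _ => integrable_finset_sum _ fun l _ =>
        (hF i j k l).1 : Integrable _ ℙ)]
    rw [Finset.sum_congr rfl fun i _ => integral_finset_sum _ fun j _ =>
      (integrable_finset_sum _ fun k _ => integrable_finset_sum _ fun l _ =>
        (hF i j k l).1 : Integrable _ ℙ)]
    rw [Finset.sum_congr rfl fun i _ => Finset.sum_congr rfl fun j _ =>
      integral_finset_sum _ fun k _ =>
        (integrable_finset_sum _ fun l _ => (hF i j k l).1 : Integrable _ ℙ)]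
    rw [Finset.sum_congr rfl fun i _ => Finset.sum_congr rfl fun j _ =>
      Finset.sum_congr rfl fun k _ => integral_finset_sum _ fun l _ => (hF i j k l).1]
    rw [Finset.sum_congr rfl fun i _ => Finset.sum_congr rfl fun j _ =>
      Finset.sum_congr rfl fun k _ => Finset.sum_congr rfl fun l _ => (hF i j k l).2]
    simp only [← Finset.mul_sum]
    rw [sumB]
  have hS2 : ∀ ω : Ω, (∑ i, ∑ j, rexp (Y i ω - Y j ω))^2
      = ∑ i, ∑ j, ∑ k, ∑ l, rexp (Y i ω - Y j ω + (Y k ω - Y l ω)) := by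
    intro ω
    rw [sq, Finset.sum_mul_sum]
    refine Finset.sum_congr rfl fun i _ => ?_
    calc ∑ k, (∑ j, rexp (Y i ω - Y j ω)) * (∑ l, rexp (Y k ω - Y l ω))
        = ∑ k, ∑ j, ∑ l, rexp (Y i ω - Y j ω) * rexp (Y k ω - Y l ω) :=
          Finset.sum_congr rfl fun k _ => by rw [Finset.sum_mul_sum]
      _ = ∑ j, ∑ k, ∑ l, rexp (Y i ω - Y j ω) * rexp (Y k ω - Y l ω) := Finset.sum_comm
      _ = ∑ j, ∑ k, ∑ l, rexp (Y i ω - Y j ω + (Y k ω - Y l ω)) :=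
          Finset.sum_congr rfl fun j _ => Finset.sum_congr rfl fun k _ =>
            Finset.sum_congr rfl fun l _ => (Real.exp_add _ _).symm
  have hfun1 : (fun ω => 1 / (n : ℝ) ^ 2 * ((∑ i, Real.exp (Y i ω)) *
        ∑ j, (Real.exp (Y j ω))⁻¹) - 1)
      = fun ω => 1/(n:ℝ)^2 * (∑ i, ∑ j, rexp (Y i ω - Y j ω)) - 1 :=
    funext fun ω => by rw [h0]
  have hfun2 : (fun ω => (1 / (n : ℝ) ^ 2 * ((∑ i, Real.exp (Y i ω)) *
        ∑ j, (Real.exp (Y j ω))⁻¹) - 1) ^ 2)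
      = fun ω => ((1/(n:ℝ)^2)^2 *
            (∑ i, ∑ j, ∑ k, ∑ l, rexp (Y i ω - Y j ω + (Y k ω - Y l ω)))
          - 2*(1/(n:ℝ)^2) * (∑ i, ∑ j, rexp (Y i ω - Y j ω))) + 1 :=
    funext fun ω => by rw [h0, ← hS2]; ring
  have hint2 : Integrable (fun ω => (1/(n:ℝ)^2)^2 *
        (∑ i, ∑ j, ∑ k, ∑ l, rexp (Y i ω - Y j ω + (Y k ω - Y l ω)))
      - 2*(1/(n:ℝ)^2) * (∑ i, ∑ j, rexp (Y i ω - Y j ω))) ℙ :=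
    (hS2int.const_mul _).sub (hSint.const_mul _)
  have hint2a : Integrable (fun ω => (1/(n:ℝ)^2)^2 *
      (∑ i, ∑ j, ∑ k, ∑ l, rexp (Y i ω - Y j ω + (Y k ω - Y l ω)))) ℙ :=
    hS2int.const_mul _
  have hint2b : Integrable
      (fun ω => 2*(1/(n:ℝ)^2) * (∑ i, ∑ j, rexp (Y i ω - Y j ω))) ℙ :=
    hSint.const_mul _
  have hint1a : Integrable
      (fun ω => 1/(n:ℝ)^2 * (∑ i, ∑ j, rexp (Y i ω - Y j ω))) ℙ :=
    hSint.const_mul _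
  rw [hfun1, hfun2]
  rw [integral_add hint2 (integrable_const 1)]
  rw [integral_sub hint2a hint2b]
  rw [integral_sub hint1a (integrable_const 1)]
  rw [MeasureTheory.integral_const_mul, MeasureTheory.integral_const_mul,
    MeasureTheory.integral_const_mul]
  rw [hIS, hIS2]
  simp only [integral_const, measure_univ, probReal_univ, ENNReal.toReal_one, smul_eq_mul, mul_one, one_smul]
  linear_combination final_alg n hn (rexp (v:ℝ)) (Real.exp_pos _)
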